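/- Discrete Gronwall lemma with weakly singular kernel: let α ∈ [0,1), let (ε_n) be a sequence of nonnegative reals satisfying ε_n ≤ a τ Σ_{k=1}^{n-1} t_{n-k}^{-α} ε_k + b for all n ≥ 1, where t_j = jτ and a, b ≥ 0, τ > 0, nτ ≤ T. Then there is a constant C depending only on a, α, T such that ε_n ≤ C b for all n with nτ ≤ T. -/

import Mathlib

set_option maxHeartbeats 1000000

lemma dg_aux_sum (α τ : ℝ) (hα0 : 0 ≤ α) (hα1 : α < 1) (hτ : 0 < τ) (M : ℕ) :
    ∑ m ∈ Finset.Icc 1 M, τ * ((m : ℝ) * τ) ^ (-α) ≤ ((M : ℝ) * τ) ^ (1 - α) / (1 - α) := by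
  have h1α : (0:ℝ) < 1 - α := by linarith
  induction M with
  | zero =>
    simp [Real.zero_rpow (by linarith : (1:ℝ) - α ≠ 0)]
  | succ M ih =>
    rw [Finset.sum_Icc_succ_top (by omega)]
    set x : ℝ := (M : ℝ) * τ with hxdef
    set y : ℝ := ((M + 1 : ℕ) : ℝ) * τ with hydef
    have hx0 : 0 ≤ x := by positivity
    have hy0 : (0:ℝ) < y := by positivity
    have hxy : x ≤ y ∧ y - x = τ := by
      constructor <;> · rw [hxdef, hydef]; push_cast; nlinarith
    have amgm : x ^ (1-α) * y ^ α ≤ (1-α) * x + α * y :=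
      Real.geom_mean_le_arith_mean2_weighted (by linarith) hα0 hx0 hy0.le (by ring)
    have hyaa : y ^ α * y ^ (-α) = 1 := by
      rw [← Real.rpow_add hy0]; simp
    have hy1 : y * y ^ (-α) = y ^ (1-α) := by
      nth_rewrite 1 [← Real.rpow_one y]
      rw [← Real.rpow_add hy0]; ring_nf
    have hxe : x ^ (1-α) = x ^ (1-α) * y ^ α * y ^ (-α) := by
      rw [mul_assoc, hyaa, mul_one]
    have hya0 : 0 ≤ y ^ (-α) := Real.rpow_nonneg hy0.le _
    have key : x ^ (1-α) + (1-α) * τ * y ^ (-α) ≤ y ^ (1-α) := by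
      calc x ^ (1-α) + (1-α) * τ * y ^ (-α)
          = (x ^ (1-α) * y ^ α + (1-α) * (y - x)) * y ^ (-α) := by
            rw [← hxy.2] at *; nth_rewrite 1 [hxe]; ring
        _ ≤ ((1-α) * x + α * y + (1-α) * (y - x)) * y ^ (-α) := by
            apply mul_le_mul_of_nonneg_right _ hya0; linarith
        _ = y * y ^ (-α) := by ring_nf
        _ = y ^ (1-α) := hy1
    have h2 : x ^ (1-α) / (1-α) + τ * y ^ (-α) ≤ y ^ (1-α) / (1-α) := by
      rw [div_add' _ _ _ (ne_of_gt h1α), div_le_div_iff₀ h1α h1α]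
      nlinarith
    linarith

theorem discrete_gronwall_singular (α : ℝ) (hα0 : 0 ≤ α) (hα1 : α < 1)
    (a T : ℝ) (ha : 0 ≤ a) (hT : 0 < T) :
    ∃ C > 0, ∀ (τ b : ℝ) (ε : ℕ → ℝ), 0 < τ → 0 ≤ b →
      (∀ n, 0 ≤ ε n) →
      (∀ n : ℕ, 1 ≤ n → (n : ℝ) * τ ≤ T →
        ε n ≤ a * τ * ∑ k ∈ Finset.Icc 1 (n - 1), (((n - k : ℕ) : ℝ) * τ) ^ (-α) * ε k + b) →
      ∀ n : ℕ, 1 ≤ n → (n : ℝ) * τ ≤ T → ε n ≤ C * b := by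
  have h1α : (0:ℝ) < 1 - α := by linarith
  set d0 : ℝ := ((1-α)/(2*(a+1))) ^ (1/(1-α)) with hd0def
  have hd0pos : 0 < d0 := Real.rpow_pos_of_pos (by positivity) _
  set δ : ℝ := min T d0 with hδdef
  have hδ0 : 0 < δ := lt_min hT hd0pos
  have hδT : δ ≤ T := min_le_left _ _
  -- key smallness of δ
  have hd0e : d0 ^ (1-α) = (1-α)/(2*(a+1)) := by
    rw [hd0def, ← Real.rpow_mul (by positivity), one_div,
      inv_mul_cancel₀ (ne_of_gt h1α), Real.rpow_one]
  have hδkey : a * (δ ^ (1-α) / (1-α)) ≤ 1/2 := by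
    have hδle : δ ^ (1-α) ≤ (1-α)/(2*(a+1)) := by
      rw [← hd0e]
      exact Real.rpow_le_rpow hδ0.le (min_le_right _ _) h1α.le
    have h2a : (0:ℝ) < 2*(a+1) := by positivity
    have h3 : a * δ ^ (1-α) ≤ (1-α)/2 := by
      calc a * δ ^ (1-α) ≤ a * ((1-α)/(2*(a+1))) :=
            mul_le_mul_of_nonneg_left hδle ha
        _ ≤ (1-α)/2 := by
            rw [mul_div_assoc', div_le_div_iff₀ h2a two_pos]; nlinarith
    rw [mul_div_assoc', div_le_iff₀ h1α]; linarith
  set A : ℝ := a * T * δ ^ (-α) with hAdef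
  have hA0 : 0 ≤ A :=
    mul_nonneg (mul_nonneg ha hT.le) (Real.rpow_nonneg hδ0.le _)
  set Q : ℝ := 2*A + 2 with hQdef
  have hQ1 : (1:ℝ) ≤ Q := by simp only [hQdef]; linarith
  set J : ℕ := ⌈T/δ⌉₊ with hJdef
  refine ⟨Q^J, by positivity, ?_⟩
  intro τ b ε hτ hb hε hrec
  have main : ∀ n : ℕ, 1 ≤ n → (n:ℝ)*τ ≤ T → ε n ≤ Q ^ (⌈((n:ℝ)*τ)/δ⌉₊) * b := by
    intro n
    induction n using Nat.strong_induction_on with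
    | _ n IH =>
      intro hn1 hnT
      set j : ℕ := ⌈((n:ℝ)*τ)/δ⌉₊ with hjdef
      have hn1R : (1:ℝ) ≤ (n:ℝ) := by exact_mod_cast hn1
      have hnτ0 : 0 < (n:ℝ)*τ := by nlinarith
      have hj1 : 1 ≤ j := Nat.one_le_ceil_iff.mpr (div_pos hnτ0 hδ0)
      have hQjb0 : 0 ≤ Q ^ j * b := mul_nonneg (by positivity) hb
      have hQj1b0 : 0 ≤ Q ^ (j-1) * b := mul_nonneg (by positivity) hb
      -- induction hypothesis bounds
      have hIHnear : ∀ k ∈ Finset.Icc 1 (n-1), ε k ≤ Q ^ j * b := by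
        intro k hk
        rw [Finset.mem_Icc] at hk
        have hkn : k < n := by omega
        have hkR : (k:ℝ) ≤ (n:ℝ) := by exact_mod_cast hkn.le
        have hkT : (k:ℝ)*τ ≤ T := le_trans (by nlinarith) hnT
        refine (IH k hkn hk.1 hkT).trans ?_
        apply mul_le_mul_of_nonneg_right _ hb
        exact pow_le_pow_right₀ hQ1
          (Nat.ceil_le_ceil (by gcongr))
      have hIHfar : ∀ k ∈ Finset.Icc 1 (n-1), ¬(((n-k:ℕ):ℝ)*τ ≤ δ) → ε k ≤ Q ^ (j-1) * b := by
        intro k hk hknear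
        rw [Finset.mem_Icc] at hk
        have hkn : k < n := by omega
        have hcast : ((n-k:ℕ):ℝ) = (n:ℝ) - (k:ℝ) := by
          rw [Nat.cast_sub hkn.le]
        rw [hcast] at hknear
        push_neg at hknear
        have hkT' : (k:ℝ)*τ ≤ (n:ℝ)*τ - δ := by nlinarith
        have hkT : (k:ℝ)*τ ≤ T := le_trans hkT' (by linarith)
        refine (IH k hkn hk.1 hkT).trans ?_
        apply mul_le_mul_of_nonneg_right _ hb
        apply pow_le_pow_right₀ hQ1
        rw [Nat.ceil_le, Nat.cast_sub hj1, Nat.cast_one]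
        have hnj : (n:ℝ)*τ/δ ≤ (j:ℝ) := Nat.le_ceil _
        have hnjδ : (n:ℝ)*τ ≤ (j:ℝ)*δ := (div_le_iff₀ hδ0).mp hnj
        rw [div_le_iff₀ hδ0]
        nlinarith
      -- kernel positivity
      have hker0 : ∀ k : ℕ, (0:ℝ) ≤ (((n-k:ℕ):ℝ)*τ) ^ (-α) := fun k =>
        Real.rpow_nonneg (by positivity) _
      -- split the sum
      set Snear := ∑ k ∈ (Finset.Icc 1 (n-1)).filter (fun k => ((n-k:ℕ):ℝ)*τ ≤ δ),
        (((n-k:ℕ):ℝ)*τ) ^ (-α) * ε k with hSneardef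
      set Sfar := ∑ k ∈ (Finset.Icc 1 (n-1)).filter (fun k => ¬(((n-k:ℕ):ℝ)*τ ≤ δ)),
        (((n-k:ℕ):ℝ)*τ) ^ (-α) * ε k with hSfardef
      have hsplit : ∑ k ∈ Finset.Icc 1 (n-1), (((n-k:ℕ):ℝ)*τ) ^ (-α) * ε k
          = Snear + Sfar :=
        (Finset.sum_filter_add_sum_filter_not _ _ _).symm
      -- near part
      have hnear : a * τ * Snear ≤ (1/2) * (Q^j * b) := by
        have h1 : Snear ≤ (∑ k ∈ (Finset.Icc 1 (n-1)).filter (fun k => ((n-k:ℕ):ℝ)*τ ≤ δ),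
            (((n-k:ℕ):ℝ)*τ) ^ (-α)) * (Q^j * b) := by
          rw [Finset.sum_mul]
          apply Finset.sum_le_sum
          intro k hk
          exact mul_le_mul_of_nonneg_left (hIHnear k (Finset.mem_filter.mp hk).1) (hker0 k)
        have hre : ∑ k ∈ (Finset.Icc 1 (n-1)).filter (fun k => ((n-k:ℕ):ℝ)*τ ≤ δ),
            τ * ((((n-k:ℕ)):ℝ)*τ) ^ (-α)
            = ∑ m ∈ Finset.Icc 1 (min (n-1) ⌊δ/τ⌋₊), τ * ((m:ℝ)*τ) ^ (-α) := by
          apply Finset.sum_nbij' (i := fun k => n - k) (j := fun m => n - m)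
          · intro k hk
            simp only [Finset.mem_filter, Finset.mem_Icc] at hk
            simp only [Finset.mem_Icc, le_min_iff]
            refine ⟨by omega, by omega, ?_⟩
            rw [Nat.le_floor_iff (by positivity), le_div_iff₀ hτ]
            exact hk.2
          · intro m hm
            simp only [Finset.mem_Icc, le_min_iff] at hm
            simp only [Finset.mem_filter, Finset.mem_Icc]
            have h1 : (m:ℝ)*τ ≤ δ := by
              have := hm.2.2
              rw [Nat.le_floor_iff (by positivity)] at this
              rw [← le_div_iff₀ hτ]; exact this
            refine ⟨⟨by omega, by omega⟩, ?_⟩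
            have : n - (n - m) = m := by omega
            rw [this]; exact h1
          · intro k hk
            simp only [Finset.mem_filter, Finset.mem_Icc] at hk
            omega
          · intro m hm
            simp only [Finset.mem_Icc, le_min_iff] at hm
            omega
          · intro k hk; rfl
        have hMτ : (((min (n-1) ⌊δ/τ⌋₊) : ℕ):ℝ)*τ ≤ δ := by
          have h2 : ((min (n-1) ⌊δ/τ⌋₊):ℕ) ≤ ⌊δ/τ⌋₊ := min_le_right _ _
          have h3 : (((min (n-1) ⌊δ/τ⌋₊) : ℕ):ℝ) ≤ δ/τ :=
            le_trans (by exact_mod_cast h2) (Nat.floor_le (by positivity))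
          rw [← le_div_iff₀ hτ]; exact h3
        have h4 : ∑ m ∈ Finset.Icc 1 (min (n-1) ⌊δ/τ⌋₊), τ * ((m:ℝ)*τ) ^ (-α) ≤ δ^(1-α)/(1-α) := by
          refine (dg_aux_sum α τ hα0 hα1 hτ (min (n-1) ⌊δ/τ⌋₊)).trans ?_
          gcongr
        have h5 : τ * ∑ k ∈ (Finset.Icc 1 (n-1)).filter (fun k => ((n-k:ℕ):ℝ)*τ ≤ δ),
            (((n-k:ℕ):ℝ)*τ) ^ (-α) ≤ δ^(1-α)/(1-α) := by
          rw [Finset.mul_sum]; rw [hre]; exact h4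
        calc a * τ * Snear ≤ a * τ * ((∑ k ∈ (Finset.Icc 1 (n-1)).filter
              (fun k => ((n-k:ℕ):ℝ)*τ ≤ δ), (((n-k:ℕ):ℝ)*τ) ^ (-α)) * (Q^j * b)) := by
              apply mul_le_mul_of_nonneg_left h1 (by positivity)
          _ = a * (τ * ∑ k ∈ (Finset.Icc 1 (n-1)).filter
              (fun k => ((n-k:ℕ):ℝ)*τ ≤ δ), (((n-k:ℕ):ℝ)*τ) ^ (-α)) * (Q^j * b) := by ring
          _ ≤ a * (δ^(1-α)/(1-α)) * (Q^j * b) := by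
              apply mul_le_mul_of_nonneg_right _ hQjb0
              exact mul_le_mul_of_nonneg_left h5 ha
          _ ≤ (1/2) * (Q^j * b) := mul_le_mul_of_nonneg_right hδkey hQjb0
      -- far part
      have hfar : a * τ * Sfar ≤ A * (Q^(j-1) * b) := by
        have hbound : ∀ k ∈ (Finset.Icc 1 (n-1)).filter (fun k => ¬(((n-k:ℕ):ℝ)*τ ≤ δ)),
            (((n-k:ℕ):ℝ)*τ) ^ (-α) * ε k ≤ δ^(-α) * (Q^(j-1) * b) := by
          intro k hk
          rw [Finset.mem_filter] at hk
          have hker : (((n-k:ℕ):ℝ)*τ) ^ (-α) ≤ δ^(-α) :=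
            Real.rpow_le_rpow_of_nonpos hδ0 (le_of_not_ge hk.2) (neg_nonpos.mpr hα0)
          have hεk := hIHfar k hk.1 hk.2
          exact mul_le_mul hker hεk (hε k) (Real.rpow_nonneg hδ0.le _)
        have hcard := Finset.sum_le_card_nsmul _ _ _ hbound
        rw [nsmul_eq_mul] at hcard
        have hcardle : (((Finset.Icc 1 (n-1)).filter
            (fun k => ¬(((n-k:ℕ):ℝ)*τ ≤ δ))).card : ℝ) ≤ (n:ℝ) := by
          have h1 : ((Finset.Icc 1 (n-1)).filter (fun k => ¬(((n-k:ℕ):ℝ)*τ ≤ δ))).card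
              ≤ (Finset.Icc 1 (n-1)).card := Finset.card_filter_le _ _
          have h2 : (Finset.Icc 1 (n-1)).card ≤ n := by
            rw [Nat.card_Icc]; omega
          exact_mod_cast le_trans h1 h2
        have hδa0 : (0:ℝ) ≤ δ^(-α) * (Q^(j-1) * b) :=
          mul_nonneg (Real.rpow_nonneg hδ0.le _) hQj1b0
        calc a * τ * Sfar ≤ a * τ * ((((Finset.Icc 1 (n-1)).filter
              (fun k => ¬(((n-k:ℕ):ℝ)*τ ≤ δ))).card : ℝ) * (δ^(-α) * (Q^(j-1) * b))) := by
              apply mul_le_mul_of_nonneg_left hcard (by positivity)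
          _ ≤ a * τ * ((n:ℝ) * (δ^(-α) * (Q^(j-1) * b))) := by
              apply mul_le_mul_of_nonneg_left _ (by positivity)
              exact mul_le_mul_of_nonneg_right hcardle hδa0
          _ = (a * ((n:ℝ)*τ)) * δ^(-α) * (Q^(j-1) * b) := by ring
          _ ≤ (a * T) * δ^(-α) * (Q^(j-1) * b) :=
              mul_le_mul_of_nonneg_right (mul_le_mul_of_nonneg_right
                (mul_le_mul_of_nonneg_left hnT ha) (Real.rpow_nonneg hδ0.le _)) hQj1b0
          _ = A * (Q^(j-1) * b) := by rw [hAdef]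
      -- combine
      have hQsplit : Q^j = Q * Q^(j-1) := by
        conv_lhs => rw [show j = (j-1)+1 by omega]
        rw [pow_succ]; ring
      have hQj1ge : (1:ℝ) ≤ Q^(j-1) := one_le_pow₀ hQ1
      have hεn := hrec n hn1 hnT
      rw [hsplit] at hεn
      have hfinal : ε n ≤ (1/2) * (Q^j * b) + A * (Q^(j-1) * b) + b := by
        calc ε n ≤ a * τ * (Snear + Sfar) + b := hεn
          _ = a * τ * Snear + a * τ * Sfar + b := by ring
          _ ≤ (1/2) * (Q^j * b) + A * (Q^(j-1) * b) + b := by linarith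
      rw [hQsplit] at hfinal ⊢
      rw [hQdef] at hfinal ⊢
      nlinarith [mul_nonneg (sub_nonneg.mpr hQj1ge) hb]
  intro n hn1 hnT
  refine (main n hn1 hnT).trans ?_
  apply mul_le_mul_of_nonneg_right _ hb
  apply pow_le_pow_right₀ hQ1
  exact Nat.ceil_le_ceil (by gcongr)
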